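/- The function u(x,t) = α·dn(α(x - st), k) with s = α²(2 - k²) is a solution of the focusing modified Korteweg–de Vries equation u_t + 6u²u_x + u_xxx = 0. -/

import Mathlib

/-- `u(x,t) = α·dn(α(x - st), k)` with `s = α²(2 - k²)` solves the
focusing mKdV equation `u_t + 6u²u_x + u_xxx = 0`. -/
theorem dn_solves_mKdV (α k s : ℝ) (hα : α ≠ 0) (hk : k ∈ Set.Ioo (0:ℝ) 1)
    (hs : s = α ^ 2 * (2 - k ^ 2))
    (sn cn dn : ℝ → ℝ)
    (hsn : ∀ x, HasDerivAt sn (cn x * dn x) x)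
    (hcn : ∀ x, HasDerivAt cn (-(sn x * dn x)) x)
    (hdn : ∀ x, HasDerivAt dn (-(k ^ 2 * sn x * cn x)) x)
    (hp1 : ∀ x, sn x ^ 2 + cn x ^ 2 = 1)
    (hp2 : ∀ x, dn x ^ 2 + k ^ 2 * sn x ^ 2 = 1) :
    ∀ x t : ℝ,
      deriv (fun t' => α * dn (α * (x - s * t'))) t
        + 6 * (α * dn (α * (x - s * t))) ^ 2
            * deriv (fun x' => α * dn (α * (x' - s * t))) x
        + iteratedDeriv 3 (fun x' => α * dn (α * (x' - s * t))) x = 0 := by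
  intro x t
  set c : ℝ := s * t with hc
  -- derivative formulas as pure functions of z
  have hd1 : ∀ z : ℝ, HasDerivAt (fun z => -(k ^ 2 * sn z * cn z))
      (-(k ^ 2 * (dn z * (cn z ^ 2 - sn z ^ 2)))) z := by
    intro z
    have h : HasDerivAt (fun i => -(k ^ 2 * (sn i * cn i)))
        (-(k ^ 2 * (cn z * dn z * cn z + sn z * -(sn z * dn z)))) z := (((hsn z).fun_mul (hcn z)).const_mul (k ^ 2)).fun_neg
    convert h using 1
    · funext w; ring
    · ring
  have hd2 : ∀ z : ℝ, HasDerivAt (fun z => -(k ^ 2 * (dn z * (cn z ^ 2 - sn z ^ 2))))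
      (-(k ^ 2 * ((-(k ^ 2 * sn z * cn z)) * (cn z ^ 2 - sn z ^ 2)
        + dn z * (2 * cn z * (-(sn z * dn z)) - 2 * sn z * (cn z * dn z))))) z := by
    intro z
    have hsq : HasDerivAt (fun z => cn z ^ 2 - sn z ^ 2)
        (2 * cn z * (-(sn z * dn z)) - 2 * sn z * (cn z * dn z)) z := by
      have h1 : HasDerivAt (fun z => cn z ^ 2) (2 * cn z * (-(sn z * dn z))) z := by
        simpa [mul_comm, mul_assoc] using ((hcn z).fun_pow 2)
      have h2 : HasDerivAt (fun z => sn z ^ 2) (2 * sn z * (cn z * dn z)) z := by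
        simpa [mul_comm, mul_assoc] using ((hsn z).fun_pow 2)
      exact h1.sub h2
    exact (((hdn z).mul hsq).const_mul (k ^ 2)).neg
  -- composition with the linear map y ↦ α * (y - c)
  have hin : ∀ y : ℝ, HasDerivAt (fun x' : ℝ => α * (x' - c)) α y := by
    intro y
    simpa using ((hasDerivAt_id y).sub_const c).const_mul α
  have key : ∀ (f f' : ℝ → ℝ), (∀ z, HasDerivAt f (f' z) z) → ∀ y : ℝ,
      HasDerivAt (fun x' => f (α * (x' - c))) (f' (α * (y - c)) * α) y := by
    intro f f' hf y
    exact (hf (α * (y - c))).comp y (hin y)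
  -- first spatial derivative
  have hu1 : deriv (fun x' => α * dn (α * (x' - c))) x
      = α * (-(k ^ 2 * sn (α * (x - c)) * cn (α * (x - c))) * α) :=
    (((key dn (fun z => -(k ^ 2 * sn z * cn z)) hdn) x).const_mul α).deriv
  -- function-level derivatives for iteration
  have hD1 : deriv (fun x' => α * dn (α * (x' - c)))
      = fun y => (α * α) * -(k ^ 2 * sn (α * (y - c)) * cn (α * (y - c))) := by
    funext y
    have := (((key dn (fun z => -(k ^ 2 * sn z * cn z)) hdn) y).const_mul α).deriv
    rw [this]; ring
  have hD2 : deriv (fun y => (α * α) * -(k ^ 2 * sn (α * (y - c)) * cn (α * (y - c))))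
      = fun y => (α * α * α) *
        -(k ^ 2 * (dn (α * (y - c)) * (cn (α * (y - c)) ^ 2 - sn (α * (y - c)) ^ 2))) := by
    funext y
    have := (((key _ _ hd1) y).const_mul (α * α)).deriv
    rw [this]; ring
  have hD3 : deriv (fun y => (α * α * α) *
        -(k ^ 2 * (dn (α * (y - c)) * (cn (α * (y - c)) ^ 2 - sn (α * (y - c)) ^ 2)))) x
      = (α * α * α) *
        (-(k ^ 2 * ((-(k ^ 2 * sn (α * (x - c)) * cn (α * (x - c))))
            * (cn (α * (x - c)) ^ 2 - sn (α * (x - c)) ^ 2)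
          + dn (α * (x - c)) * (2 * cn (α * (x - c)) * (-(sn (α * (x - c)) * dn (α * (x - c))))
            - 2 * sn (α * (x - c)) * (cn (α * (x - c)) * dn (α * (x - c)))))) * α) :=
    (((key _ _ hd2) x).const_mul (α * α * α)).deriv
  have h3 : iteratedDeriv 3 (fun x' => α * dn (α * (x' - c))) x
      = (α * α * α) *
        (-(k ^ 2 * ((-(k ^ 2 * sn (α * (x - c)) * cn (α * (x - c))))
            * (cn (α * (x - c)) ^ 2 - sn (α * (x - c)) ^ 2)
          + dn (α * (x - c)) * (2 * cn (α * (x - c)) * (-(sn (α * (x - c)) * dn (α * (x - c))))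
            - 2 * sn (α * (x - c)) * (cn (α * (x - c)) * dn (α * (x - c)))))) * α) := by
    rw [show (3 : ℕ) = 2 + 1 from rfl, iteratedDeriv_succ,
      show (2 : ℕ) = 1 + 1 from rfl, iteratedDeriv_succ, iteratedDeriv_one,
      hD1, hD2, hD3]
  -- time derivative
  have hint : HasDerivAt (fun t' : ℝ => α * (x - s * t')) (α * (-s)) t := by
    have h : HasDerivAt (fun t' : ℝ => x - s * t') (0 - s * 1) t :=
      (hasDerivAt_const t x).sub ((hasDerivAt_id t).const_mul s)
    simpa using h.const_mul α
  have ht : deriv (fun t' => α * dn (α * (x - s * t'))) t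
      = α * (-(k ^ 2 * sn (α * (x - c)) * cn (α * (x - c))) * (α * (-s))) := by
    have h := (((hdn (α * (x - s * t))).comp t hint).const_mul α)
    rw [hc]
    exact h.deriv
  rw [ht, hu1, h3, hs]
  have e1 := hp1 (α * (x - c))
  have e2 := hp2 (α * (x - c))
  linear_combination (α ^ 4 * k ^ 4 * sn (α * (x - c)) * cn (α * (x - c))) * e1
    - 2 * α ^ 4 * k ^ 2 * sn (α * (x - c)) * cn (α * (x - c)) * e2
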